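/- For every x ∈ ℝ^{2n+4}, one has Γ·R(x) = 0 if and only if Ã_κᵗ·Ψ(x) = 0. -/
import Mathlib


open Matrix Finset

noncomputable section

/-- The `m`-th (1-based) standard basis vector of `ℝ^(2n+4)`. -/
def E (n : ℕ) (m : ℕ) : Fin (2*n+4) → ℝ := fun j => if (j : ℕ) + 1 = m then 1 else 0

/-- The value of a vector `x ∈ ℝ^(2n+4)` at the (1-based) math index `m`. -/
def X (n : ℕ) (x : Fin (2*n+4) → ℝ) (m : ℕ) : ℝ :=
  if h : m - 1 < 2*n+4 then x ⟨m - 1, h⟩ else 0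

/-- The stoichiometric matrix `Γ` of the processive `n`-site phosphorylation network;
columns are indexed 1-based as in the paper. -/
def Gamma (n : ℕ) : Matrix (Fin (2*n+4)) (Fin (2*n+2)) ℝ :=
  Matrix.of fun r c0 =>
    (let c := (c0 : ℕ) + 1
     if c = 1 then E n 5 - E n 1 - E n 3
     else if c ≤ n then E n (2*(c-1)+5) - E n (2*(c-1)+3)
     else if c = n+1 then E n 1 + E n 4 - E n (2*n+3)
     else if c = n+2 then E n (2*n+4) - E n 2 - E n 4
     else if c ≤ 2*n+1 then E n (2*n+4-2*(c-(n+2))) - E n (2*n+6-2*(c-(n+2)))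
     else E n 2 + E n 3 - E n 6) r

/-- The mass-action reaction rate function `R : ℝ^(2n+4) → ℝ^(2n+2)` of the processive
`n`-site phosphorylation network (coordinates indexed 1-based). -/
def Rvec (n : ℕ) (k l : ℕ → ℝ) (x : Fin (2*n+4) → ℝ) : Fin (2*n+2) → ℝ := fun a0 =>
  let a := (a0 : ℕ) + 1
  if a = 1 then k 1 * X n x 1 * X n x 3 - k 2 * X n x 5
  else if a ≤ n then
    k (2*(a-1)+1) * X n x (2*(a-1)+3) - k (2*(a-1)+2) * X n x (2*(a-1)+5)
  else if a = n+1 then k (2*n+1) * X n x (2*n+3)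
  else if a = n+2 then l (2*n+1) * X n x 2 * X n x 4 - l (2*n) * X n x (2*n+4)
  else if a ≤ 2*n+1 then
    l (2*(n-(a-(n+2)))+1) * X n x (2*(n-(a-(n+2)))+6)
      - l (2*(n-(a-(n+2)))) * X n x (2*(n-(a-(n+2)))+4)
  else l 1 * X n x 6

/-- The label of the edge `a → b` (nodes 1-based in `{1, …, 2n+2}`) in the labeled digraph
underlying the translated processive network; `0` if there is no such edge. -/
def lab (n : ℕ) (k l : ℕ → ℝ) (a b : ℕ) : ℝ :=
  if 1 ≤ a ∧ a ≤ n ∧ b = a+1 then k (2*a-1)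
  else if 1 ≤ b ∧ b ≤ n ∧ a = b+1 then k (2*b)
  else if a = n+1 ∧ b = n+2 then k (2*n+1)
  else if n+2 ≤ a ∧ a ≤ 2*n+1 ∧ b = a+1 then l (2*(n+1-(a-(n+1)))+1)
  else if n+3 ≤ a ∧ a ≤ 2*n+2 ∧ b+1 = a then l (2*(n+1-(a-(n+2))))
  else if a = 2*n+2 ∧ b = 1 then l 1
  else 0

/-- The matrix `Ã_κᵗ` of the translated processive network: for `j ≠ i` the `(j,i)` entry
is the label of the edge `i → j` (or `0`), and the `(i,i)` entry is minus the sum of the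
labels of all edges leaving node `i`. -/
def Atilde (n : ℕ) (k l : ℕ → ℝ) : Matrix (Fin (2*n+2)) (Fin (2*n+2)) ℝ :=
  Matrix.of fun j i =>
    if j = i then -(∑ b ∈ Finset.range (2*n+3), lab n k l ((i : ℕ)+1) b)
    else lab n k l ((i : ℕ)+1) ((j : ℕ)+1)

/-- The monomial map `Ψ : ℝ^(2n+4) → ℝ^(2n+2)` of the translated processive network
(coordinates indexed 1-based). -/
def Psi (n : ℕ) (x : Fin (2*n+4) → ℝ) : Fin (2*n+2) → ℝ := fun a0 =>
  let a := (a0 : ℕ) + 1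
  if a = 1 then X n x 1 * X n x 3
  else if a ≤ n+1 then X n x (2*a+1)
  else if a = n+2 then X n x 2 * X n x 4
  else X n x (2*n+6-2*(a-(n+2)))


def Fv (n : ℕ) (k l : ℕ → ℝ) (x : Fin (2*n+4) → ℝ) (a : ℕ) : ℝ :=
  if a = 1 then k 1 * X n x 1 * X n x 3 - k 2 * X n x 5
  else if a ≤ n then
    k (2*(a-1)+1) * X n x (2*(a-1)+3) - k (2*(a-1)+2) * X n x (2*(a-1)+5)
  else if a = n+1 then k (2*n+1) * X n x (2*n+3)
  else if a = n+2 then l (2*n+1) * X n x 2 * X n x 4 - l (2*n) * X n x (2*n+4)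
  else if a ≤ 2*n+1 then
    l (2*(n-(a-(n+2)))+1) * X n x (2*(n-(a-(n+2)))+6)
      - l (2*(n-(a-(n+2)))) * X n x (2*(n-(a-(n+2)))+4)
  else l 1 * X n x 6

lemma Rvec_eq (n : ℕ) (k l : ℕ → ℝ) (x : Fin (2*n+4) → ℝ) (a0 : Fin (2*n+2)) :
    Rvec n k l x a0 = Fv n k l x ((a0 : ℕ)+1) := rfl

def Pv (n : ℕ) (x : Fin (2*n+4) → ℝ) (a : ℕ) : ℝ :=
  if a = 1 then X n x 1 * X n x 3
  else if a ≤ n+1 then X n x (2*a+1)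
  else if a = n+2 then X n x 2 * X n x 4
  else X n x (2*n+6-2*(a-(n+2)))

lemma Psi_eq (n : ℕ) (x : Fin (2*n+4) → ℝ) (a0 : Fin (2*n+2)) :
    Psi n x a0 = Pv n x ((a0 : ℕ)+1) := rfl

def Fl (n : ℕ) (k l : ℕ → ℝ) (x : Fin (2*n+4) → ℝ) (e : ℕ) : ℝ :=
  lab n k l e (e+1) * Pv n x e - lab n k l (e+1) e * Pv n x (e+1)
    + (if e = 2*n+2 then l 1 * Pv n x (2*n+2) else 0)

lemma lab_zero (n : ℕ) (k l : ℕ → ℝ) (a b : ℕ)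
    (h : ¬ (b = a+1 ∨ a = b+1 ∨ (a = 2*n+2 ∧ b = 1))) : lab n k l a b = 0 := by
  unfold lab
  split_ifs <;> first | rfl | (exfalso; omega) | (exfalso; tauto)

lemma lab01 (n : ℕ) (k l : ℕ → ℝ) : lab n k l 0 1 = 0 := by
  unfold lab; split_ifs <;> first | rfl | (exfalso; omega) | (exfalso; tauto)

lemma lab10 (n : ℕ) (k l : ℕ → ℝ) : lab n k l 1 0 = 0 := by
  unfold lab; split_ifs <;> first | rfl | (exfalso; omega) | (exfalso; tauto)

lemma labTop1 (n : ℕ) (k l : ℕ → ℝ) : lab n k l (2*n+3) (2*n+2) = 0 := by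
  unfold lab; split_ifs <;> first | rfl | (exfalso; omega) | (exfalso; tauto)

lemma labTop2 (n : ℕ) (k l : ℕ → ℝ) : lab n k l (2*n+2) (2*n+3) = 0 := by
  unfold lab; split_ifs <;> first | rfl | (exfalso; omega) | (exfalso; tauto)

lemma labmid (n : ℕ) (hn : 1 ≤ n) (k l : ℕ → ℝ) : lab n k l (n+2) (n+1) = 0 := by
  unfold lab; split_ifs <;> first | rfl | (exfalso; omega) | (exfalso; tauto)

lemma lab_self (n : ℕ) (k l : ℕ → ℝ) (a : ℕ) : lab n k l a a = 0 :=
  lab_zero n k l a a (by omega)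

lemma lab_fwd1 (n : ℕ) (k l : ℕ → ℝ) (e : ℕ) (h1 : 1 ≤ e) (h2 : e ≤ n) :
    lab n k l e (e+1) = k (2*e-1) := by
  unfold lab; rw [if_pos ⟨h1, h2, rfl⟩]

lemma lab_bwd1 (n : ℕ) (k l : ℕ → ℝ) (e : ℕ) (h1 : 1 ≤ e) (h2 : e ≤ n) :
    lab n k l (e+1) e = k (2*e) := by
  unfold lab
  rw [if_neg (by omega), if_pos ⟨h1, h2, rfl⟩]

lemma lab_fwd2 (n : ℕ) (k l : ℕ → ℝ) :
    lab n k l (n+1) (n+2) = k (2*n+1) := by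
  unfold lab
  rw [if_neg (by omega), if_neg (by omega), if_pos ⟨rfl, rfl⟩]

lemma lab_fwd3 (n : ℕ) (k l : ℕ → ℝ) (e : ℕ) (h1 : n+2 ≤ e) (h2 : e ≤ 2*n+1) :
    lab n k l e (e+1) = l (2*(n+1-(e-(n+1)))+1) := by
  unfold lab
  rw [if_neg (by omega), if_neg (by omega), if_neg (by omega), if_pos ⟨h1, h2, rfl⟩]

lemma lab_bwd3 (n : ℕ) (k l : ℕ → ℝ) (e : ℕ) (h1 : n+2 ≤ e) (h2 : e ≤ 2*n+1) :
    lab n k l (e+1) e = l (2*(n+1-(e+1-(n+2)))) := by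
  unfold lab
  rw [if_neg (by omega), if_neg (by omega), if_neg (by omega), if_neg (by omega),
    if_pos ⟨by omega, by omega, rfl⟩]

lemma lab_wrap (n : ℕ) (hn : 1 ≤ n) (k l : ℕ → ℝ) :
    lab n k l (2*n+2) 1 = l 1 := by
  unfold lab
  rw [if_neg (by omega), if_neg (by omega), if_neg (by omega), if_neg (by omega),
    if_neg (by omega), if_pos ⟨rfl, rfl⟩]

lemma Pv1 (n : ℕ) (x : Fin (2*n+4) → ℝ) : Pv n x 1 = X n x 1 * X n x 3 := if_pos rfl

lemma Pv_mid (n : ℕ) (x : Fin (2*n+4) → ℝ) (a : ℕ) (h1 : 2 ≤ a) (h2 : a ≤ n+1) :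
    Pv n x a = X n x (2*a+1) := by
  unfold Pv; rw [if_neg (by omega), if_pos h2]

lemma Pv_n2 (n : ℕ) (x : Fin (2*n+4) → ℝ) : Pv n x (n+2) = X n x 2 * X n x 4 := by
  unfold Pv; rw [if_neg (by omega), if_neg (by omega), if_pos rfl]

lemma Pv_hi (n : ℕ) (x : Fin (2*n+4) → ℝ) (a : ℕ) (h1 : n+3 ≤ a) :
    Pv n x a = X n x (2*n+6-2*(a-(n+2))) := by
  unfold Pv; rw [if_neg (by omega), if_neg (by omega), if_neg (by omega)]

lemma Fv1 (n : ℕ) (k l : ℕ → ℝ) (x : Fin (2*n+4) → ℝ) :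
    Fv n k l x 1 = k 1 * X n x 1 * X n x 3 - k 2 * X n x 5 := if_pos rfl

lemma Fv_mid (n : ℕ) (k l : ℕ → ℝ) (x : Fin (2*n+4) → ℝ) (a : ℕ) (h1 : 2 ≤ a) (h2 : a ≤ n) :
    Fv n k l x a
      = k (2*(a-1)+1) * X n x (2*(a-1)+3) - k (2*(a-1)+2) * X n x (2*(a-1)+5) := by
  unfold Fv; rw [if_neg (by omega), if_pos h2]

lemma Fv_n1 (n : ℕ) (hn : 1 ≤ n) (k l : ℕ → ℝ) (x : Fin (2*n+4) → ℝ) :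
    Fv n k l x (n+1) = k (2*n+1) * X n x (2*n+3) := by
  unfold Fv; rw [if_neg (by omega), if_neg (by omega), if_pos rfl]

lemma Fv_n2 (n : ℕ) (hn : 1 ≤ n) (k l : ℕ → ℝ) (x : Fin (2*n+4) → ℝ) :
    Fv n k l x (n+2) = l (2*n+1) * X n x 2 * X n x 4 - l (2*n) * X n x (2*n+4) := by
  unfold Fv; rw [if_neg (by omega), if_neg (by omega), if_neg (by omega), if_pos rfl]

lemma Fv_hi (n : ℕ) (k l : ℕ → ℝ) (x : Fin (2*n+4) → ℝ) (a : ℕ)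
    (h1 : n+3 ≤ a) (h2 : a ≤ 2*n+1) :
    Fv n k l x a
      = l (2*(n-(a-(n+2)))+1) * X n x (2*(n-(a-(n+2)))+6)
        - l (2*(n-(a-(n+2)))) * X n x (2*(n-(a-(n+2)))+4) := by
  unfold Fv
  rw [if_neg (by omega), if_neg (by omega), if_neg (by omega), if_neg (by omega), if_pos h2]

lemma Fv_top (n : ℕ) (hn : 1 ≤ n) (k l : ℕ → ℝ) (x : Fin (2*n+4) → ℝ) :
    Fv n k l x (2*n+2) = l 1 * X n x 6 := by
  unfold Fv
  rw [if_neg (by omega), if_neg (by omega), if_neg (by omega), if_neg (by omega),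
    if_neg (by omega)]

lemma Fl_eq (n : ℕ) (hn : 1 ≤ n) (k l : ℕ → ℝ) (x : Fin (2*n+4) → ℝ) (e : ℕ)
    (he1 : 1 ≤ e) (he2 : e ≤ 2*n+2) : Fl n k l x e = Fv n k l x e := by
  unfold Fl
  rcases show e = 1 ∨ (2 ≤ e ∧ e ≤ n) ∨ e = n+1 ∨ e = n+2 ∨ (n+3 ≤ e ∧ e ≤ 2*n+1) ∨ e = 2*n+2
      from by omega with h | h | h | h | h | h
  · subst h
    rw [lab_fwd1 n k l 1 le_rfl hn, lab_bwd1 n k l 1 le_rfl hn, if_neg (by omega),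
      Pv1, Pv_mid n x 2 le_rfl (by omega), Fv1,
      show (2*1-1 : ℕ) = 1 from rfl, show (2*1 : ℕ) = 2 from rfl,
      show (2*2+1 : ℕ) = 5 from rfl]
    ring
  · rw [lab_fwd1 n k l e (by omega) (by omega), lab_bwd1 n k l e (by omega) (by omega),
      if_neg (by omega), Pv_mid n x e (by omega) (by omega),
      Pv_mid n x (e+1) (by omega) (by omega), Fv_mid n k l x e h.1 h.2,
      show 2*(e-1)+1 = 2*e-1 from by omega, show 2*(e-1)+3 = 2*e+1 from by omega,
      show 2*(e-1)+2 = 2*e from by omega, show 2*(e-1)+5 = 2*(e+1)+1 from by omega]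
    ring
  · subst h
    rw [lab_fwd2 n k l, labmid n hn k l, if_neg (by omega),
      Pv_mid n x (n+1) (by omega) (by omega), Fv_n1 n hn k l x,
      show 2*(n+1)+1 = 2*n+3 from by omega]
    ring
  · subst h
    rw [lab_fwd3 n k l (n+2) le_rfl (by omega), lab_bwd3 n k l (n+2) le_rfl (by omega),
      if_neg (by omega), Pv_n2, Pv_hi n x (n+3) le_rfl, Fv_n2 n hn k l x,
      show 2*(n+1-(n+2-(n+1)))+1 = 2*n+1 from by omega,
      show 2*(n+1-(n+2+1-(n+2))) = 2*n from by omega,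
      show 2*n+6-2*(n+3-(n+2)) = 2*n+4 from by omega]
    ring
  · rw [lab_fwd3 n k l e (by omega) (by omega), lab_bwd3 n k l e (by omega) (by omega),
      if_neg (by omega), Pv_hi n x e (by omega), Pv_hi n x (e+1) (by omega),
      Fv_hi n k l x e h.1 h.2,
      show 2*(n+1-(e-(n+1)))+1 = 2*(n-(e-(n+2)))+1 from by omega,
      show 2*n+6-2*(e-(n+2)) = 2*(n-(e-(n+2)))+6 from by omega,
      show 2*(n+1-(e+1-(n+2))) = 2*(n-(e-(n+2))) from by omega,
      show 2*n+6-2*(e+1-(n+2)) = 2*(n-(e-(n+2)))+4 from by omega]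
    ring
  · subst h
    rw [labTop2 n k l, labTop1 n k l, if_pos rfl, Fv_top n hn k l x,
      Pv_hi n x (2*n+2) (by omega), show 2*n+6-2*(2*n+2-(n+2)) = 6 from by omega]
    ring

lemma chain (n : ℕ) (k l : ℕ → ℝ) (x : Fin (2*n+4) → ℝ)
    (hC : ∀ j, 1 ≤ j → j ≤ 2*n+1 → Fv n k l x j = Fv n k l x (j+1)) :
    ∀ j, 1 ≤ j → j ≤ 2*n+2 → Fv n k l x j = Fv n k l x 1 := by
  intro j
  induction j with
  | zero => omega
  | succ m ih =>
    intro h1 h2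
    rcases Nat.eq_zero_or_pos m with hm | hm
    · rw [hm]
    · rw [← hC m hm (by omega)]
      exact ih hm (by omega)

lemma sum_ind (N c : ℕ) (v : ℝ) :
    (∑ m ∈ Finset.range N, if m + 1 = c then v else 0) = if 1 ≤ c ∧ c ≤ N then v else 0 := by
  induction N with
  | zero => rw [Finset.sum_range_zero, if_neg (by omega)]
  | succ m ih =>
    rw [Finset.sum_range_succ, ih]
    split_ifs <;> first | (exfalso; omega) | ring1

lemma lab_sum (n : ℕ) (hn : 1 ≤ n) (k l : ℕ → ℝ) (J : ℕ) (hJ1 : 1 ≤ J) (hJ2 : J ≤ 2*n+2) :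
    ∑ b ∈ Finset.range (2*n+3), lab n k l J b
      = lab n k l J (J-1) + lab n k l J (J+1) + (if J = 2*n+2 then l 1 else 0) := by
  by_cases hw : J = 2*n+2
  · subst hw
    have hpt : ∀ b ∈ Finset.range (2*n+3), lab n k l (2*n+2) b
        = (if b = 2*n+2-1 then lab n k l (2*n+2) (2*n+2-1) else 0)
          + (if b = 1 then l 1 else 0) := by
      intro b hb
      rw [Finset.mem_range] at hb
      by_cases h1 : b = 2*n+2-1
      · rw [if_pos h1, if_neg (by omega), h1]; ring
      · by_cases h2 : b = 1
        · rw [if_neg h1, if_pos h2, h2, lab_wrap n hn k l]; ring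
        · rw [if_neg h1, if_neg h2, lab_zero n k l _ _ (by omega)]; ring
    rw [Finset.sum_congr rfl hpt, Finset.sum_add_distrib, Finset.sum_ite_eq',
      Finset.sum_ite_eq', if_pos (by rw [Finset.mem_range]; omega),
      if_pos (by rw [Finset.mem_range]; omega), if_pos rfl, labTop2 n k l]
    ring
  · have hpt : ∀ b ∈ Finset.range (2*n+3), lab n k l J b
        = (if b = J-1 then lab n k l J (J-1) else 0)
          + (if b = J+1 then lab n k l J (J+1) else 0) := by
      intro b hb
      rw [Finset.mem_range] at hb
      by_cases h1 : b = J-1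
      · rw [if_pos h1, if_neg (by omega), h1]; ring
      · by_cases h2 : b = J+1
        · rw [if_neg h1, if_pos h2, h2]; ring
        · rw [if_neg h1, if_neg h2, lab_zero n k l _ _ (by omega)]; ring
    rw [Finset.sum_congr rfl hpt, Finset.sum_add_distrib, Finset.sum_ite_eq',
      Finset.sum_ite_eq', if_pos (by rw [Finset.mem_range]; omega),
      if_pos (by rw [Finset.mem_range]; omega), if_neg hw]
    ring

lemma lab_insum (n : ℕ) (hn : 1 ≤ n) (k l : ℕ → ℝ) (x : Fin (2*n+4) → ℝ) (J : ℕ)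
    (hJ1 : 1 ≤ J) (hJ2 : J ≤ 2*n+2) :
    ∑ m ∈ Finset.range (2*n+2), lab n k l (m+1) J * Pv n x (m+1)
      = lab n k l (J-1) J * Pv n x (J-1) + lab n k l (J+1) J * Pv n x (J+1)
        + (if J = 1 then l 1 * Pv n x (2*n+2) else 0) := by
  by_cases hw : J = 1
  · subst hw
    have hpt : ∀ m ∈ Finset.range (2*n+2), lab n k l (m+1) 1 * Pv n x (m+1)
        = (if m+1 = 2 then lab n k l 2 1 * Pv n x 2 else 0)
          + (if m+1 = 2*n+2 then l 1 * Pv n x (2*n+2) else 0) := by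
      intro m hm
      rw [Finset.mem_range] at hm
      by_cases h1 : m+1 = 2
      · rw [if_pos h1, if_neg (by omega), h1]; ring
      · by_cases h2 : m+1 = 2*n+2
        · rw [if_neg h1, if_pos h2, h2, lab_wrap n hn k l]; ring
        · rw [if_neg h1, if_neg h2, lab_zero n k l _ _ (by omega)]; ring
    rw [Finset.sum_congr rfl hpt, Finset.sum_add_distrib, sum_ind, sum_ind,
      if_pos (by omega), if_pos (by omega), if_pos rfl, lab01 n k l]
    ring
  · have hpt : ∀ m ∈ Finset.range (2*n+2), lab n k l (m+1) J * Pv n x (m+1)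
        = (if m+1 = J-1 then lab n k l (J-1) J * Pv n x (J-1) else 0)
          + (if m+1 = J+1 then lab n k l (J+1) J * Pv n x (J+1) else 0) := by
      intro m hm
      rw [Finset.mem_range] at hm
      by_cases h1 : m+1 = J-1
      · rw [if_pos h1, if_neg (by omega), h1]; ring
      · by_cases h2 : m+1 = J+1
        · rw [if_neg h1, if_pos h2, h2]; ring
        · rw [if_neg h1, if_neg h2, lab_zero n k l _ _ (by omega)]; ring
    rw [Finset.sum_congr rfl hpt, Finset.sum_add_distrib, sum_ind, sum_ind, if_neg hw]
    by_cases hT : J = 2*n+2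
    · rw [if_pos (by omega), if_neg (by omega), hT,
        show 2*n+2+1 = 2*n+3 from rfl, labTop1 n k l]
      ring
    · rw [if_pos (by omega), if_pos (by omega)]
      ring

lemma Atilde_row (n : ℕ) (hn : 1 ≤ n) (k l : ℕ → ℝ) (x : Fin (2*n+4) → ℝ)
    (j : Fin (2*n+2)) :
    (Atilde n k l).mulVec (Psi n x) j
      = Fl n k l x (if (j : ℕ) = 0 then 2*n+2 else (j : ℕ)) - Fl n k l x ((j : ℕ)+1) := by
  have hb : (j : ℕ) < 2*n+2 := j.isLt
  have hA : ∀ i : Fin (2*n+2), Atilde n k l j i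
      = if j = i then -(∑ b ∈ Finset.range (2*n+3), lab n k l ((i : ℕ)+1) b)
        else lab n k l ((i : ℕ)+1) ((j : ℕ)+1) := fun _ => rfl
  have hΨ : ∀ i : Fin (2*n+2), Psi n x i = Pv n x ((i : ℕ)+1) := fun _ => rfl
  have step1 : (Atilde n k l).mulVec (Psi n x) j
      = (∑ i ∈ Finset.univ.erase j, lab n k l ((i : ℕ)+1) ((j : ℕ)+1) * Pv n x ((i : ℕ)+1))
        + -(∑ b ∈ Finset.range (2*n+3), lab n k l ((j : ℕ)+1) b) * Pv n x ((j : ℕ)+1) := by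
    show ∑ i : Fin (2*n+2), Atilde n k l j i * Psi n x i = _
    rw [← Finset.sum_erase_add _ _ (Finset.mem_univ j)]
    congr 1
    · exact Finset.sum_congr rfl fun i hi => by
        rw [hA, hΨ, if_neg (Finset.ne_of_mem_erase hi).symm]
    · rw [hA, hΨ, if_pos rfl]
  rw [step1, Finset.sum_erase _ (by rw [lab_self]; ring),
    show (∑ i : Fin (2*n+2), lab n k l ((i : ℕ)+1) ((j : ℕ)+1) * Pv n x ((i : ℕ)+1))
        = ∑ m ∈ Finset.range (2*n+2), lab n k l (m+1) ((j : ℕ)+1) * Pv n x (m+1)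
      from Fin.sum_univ_eq_sum_range (fun m => lab n k l (m+1) ((j : ℕ)+1) * Pv n x (m+1)) (2*n+2),
    lab_insum n hn k l x ((j : ℕ)+1) (by omega) (by omega),
    lab_sum n hn k l ((j : ℕ)+1) (by omega) (by omega)]
  simp only [Nat.add_sub_cancel]
  by_cases hj0 : (j : ℕ) = 0
  · rw [hj0]
    norm_num
    unfold Fl
    rw [show 2*n+2+1 = 2*n+3 from rfl, if_pos rfl, if_neg (by omega : ¬ (1 : ℕ) = 2*n+2),
      labTop2 n k l, labTop1 n k l, lab01 n k l, lab10 n k l]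
    ring
  · rw [if_neg (by omega : ¬ (j : ℕ)+1 = 1), if_neg hj0]
    by_cases hT : (j : ℕ)+1 = 2*n+2
    · rw [if_pos hT]
      unfold Fl
      rw [if_neg (by omega : ¬ (j : ℕ) = 2*n+2), if_pos hT, hT,
        show (j : ℕ) = 2*n+1 from by omega]
      ring
    · rw [if_neg hT]
      unfold Fl
      rw [if_neg (by omega : ¬ (j : ℕ) = 2*n+2), if_neg hT]
      ring

lemma Atilde_iff (n : ℕ) (hn : 1 ≤ n) (k l : ℕ → ℝ) (x : Fin (2*n+4) → ℝ) :
    (Atilde n k l).mulVec (Psi n x) = 0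
      ↔ ∀ j, 1 ≤ j → j ≤ 2*n+1 → Fv n k l x j = Fv n k l x (j+1) := by
  constructor
  · intro h j h1 h2
    have hr := congrFun h ⟨j, by omega⟩
    rw [Atilde_row n hn k l x ⟨j, by omega⟩] at hr
    simp only [Fin.val_mk, Pi.zero_apply] at hr
    rw [if_neg (by omega)] at hr
    rw [← Fl_eq n hn k l x j (by omega) (by omega),
      ← Fl_eq n hn k l x (j+1) (by omega) (by omega)]
    linarith
  · intro hC
    funext j
    have hb : (j : ℕ) < 2*n+2 := j.isLt
    rw [Atilde_row n hn k l x j, Pi.zero_apply]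
    by_cases hj0 : (j : ℕ) = 0
    · rw [if_pos hj0, Fl_eq n hn k l x (2*n+2) (by omega) (by omega),
        Fl_eq n hn k l x ((j : ℕ)+1) (by omega) (by omega),
        chain n k l x hC (2*n+2) (by omega) (by omega),
        chain n k l x hC ((j : ℕ)+1) (by omega) (by omega)]
      ring
    · rw [if_neg hj0, Fl_eq n hn k l x (j : ℕ) (by omega) (by omega),
        Fl_eq n hn k l x ((j : ℕ)+1) (by omega) (by omega),
        chain n k l x hC (j : ℕ) (by omega) (by omega),
        chain n k l x hC ((j : ℕ)+1) (by omega) (by omega)]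
      ring

def entf (n ρ c0 : ℕ) : ℝ :=
  let c := c0 + 1
  let e : ℕ → ℝ := fun m => if ρ = m then 1 else 0
  if c = 1 then e 5 - e 1 - e 3
  else if c ≤ n then e (2*(c-1)+5) - e (2*(c-1)+3)
  else if c = n+1 then e 1 + e 4 - e (2*n+3)
  else if c = n+2 then e (2*n+4) - e 2 - e 4
  else if c ≤ 2*n+1 then e (2*n+4-2*(c-(n+2))) - e (2*n+6-2*(c-(n+2)))
  else e 2 + e 3 - e 6

lemma fun_ite {α β : Type*} (P : Prop) [Decidable P] (f g : α → β) (a : α) :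
    (if P then f else g) a = if P then f a else g a := apply_ite (fun h => h a) P f g

lemma Gamma_apply (n : ℕ) (r : Fin (2*n+4)) (c0 : Fin (2*n+2)) :
    Gamma n r c0 = entf n ((r : ℕ)+1) (c0 : ℕ) := by
  unfold Gamma entf
  simp only [Matrix.of_apply, fun_ite, Pi.sub_apply, Pi.add_apply, E]

lemma Gamma_mulVec (n : ℕ) (k l : ℕ → ℝ) (x : Fin (2*n+4) → ℝ) (r : Fin (2*n+4)) :
    (Gamma n).mulVec (Rvec n k l x) r
      = ∑ c0 ∈ Finset.range (2*n+2), entf n ((r : ℕ)+1) c0 * Fv n k l x (c0+1) := by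
  rw [← Fin.sum_univ_eq_sum_range (fun c0 => entf n ((r : ℕ)+1) c0 * Fv n k l x (c0+1)) (2*n+2)]
  show ∑ c0 : Fin (2*n+2), Gamma n r c0 * Rvec n k l x c0 = _
  exact Finset.sum_congr rfl fun c0 _ => by rw [Gamma_apply, Rvec_eq]

lemma entf_0 (n ρ : ℕ) : entf n ρ 0
    = (if ρ = 5 then (1:ℝ) else 0) - (if ρ = 1 then 1 else 0) - (if ρ = 3 then 1 else 0) := by
  unfold entf; rw [if_pos rfl]

lemma entf_m1 (n ρ c : ℕ) (h1 : 1 ≤ c) (h2 : c < n) : entf n ρ c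
    = (if ρ = 2*(c+1)+3 then (1:ℝ) else 0) - (if ρ = 2*c+3 then 1 else 0) := by
  unfold entf
  rw [if_neg (by omega), if_pos (by omega : c+1 ≤ n),
    show 2*(c+1-1)+5 = 2*(c+1)+3 from by omega, show 2*(c+1-1)+3 = 2*c+3 from by omega]

lemma entf_n (n ρ : ℕ) (hn : 1 ≤ n) : entf n ρ n
    = (if ρ = 1 then (1:ℝ) else 0) + (if ρ = 4 then 1 else 0)
      - (if ρ = 2*n+3 then 1 else 0) := by
  unfold entf
  rw [if_neg (by omega), if_neg (by omega), if_pos rfl]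

lemma entf_n1 (n ρ : ℕ) : entf n ρ (n+1)
    = (if ρ = 2*n+4 then (1:ℝ) else 0) - (if ρ = 2 then 1 else 0)
      - (if ρ = 4 then 1 else 0) := by
  unfold entf
  rw [if_neg (by omega), if_neg (by omega), if_neg (by omega), if_pos rfl]

lemma entf_m2 (n ρ c : ℕ) (h1 : n+2 ≤ c) (h2 : c < 2*n+1) : entf n ρ c
    = (if ρ = 4*n+8-2*(c+1) then (1:ℝ) else 0) - (if ρ = 4*n+8-2*c then 1 else 0) := by
  unfold entf
  rw [if_neg (by omega), if_neg (by omega), if_neg (by omega), if_neg (by omega),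
    if_pos (by omega : c+1 ≤ 2*n+1),
    show 2*n+4-2*(c+1-(n+2)) = 4*n+8-2*(c+1) from by omega,
    show 2*n+6-2*(c+1-(n+2)) = 4*n+8-2*c from by omega]

lemma entf_last (n ρ : ℕ) (hn : 1 ≤ n) : entf n ρ (2*n+1)
    = (if ρ = 2 then (1:ℝ) else 0) + (if ρ = 3 then 1 else 0)
      - (if ρ = 6 then 1 else 0) := by
  unfold entf
  rw [if_neg (by omega), if_neg (by omega), if_neg (by omega), if_neg (by omega),
    if_neg (by omega)]

lemma split_sum (n : ℕ) (hn : 1 ≤ n) (t : ℕ → ℝ) :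
    ∑ c ∈ Finset.range (2*n+2), t c
      = t 0 + (∑ c ∈ Finset.Ico 1 n, t c) + t n + t (n+1)
        + (∑ c ∈ Finset.Ico (n+2) (2*n+1), t c) + t (2*n+1) := by
  rw [Finset.range_eq_Ico,
    ← Finset.sum_Ico_consecutive t (by omega : (0:ℕ) ≤ 1) (by omega : 1 ≤ 2*n+2),
    ← Finset.sum_Ico_consecutive t (by omega : (1:ℕ) ≤ n) (by omega : n ≤ 2*n+2),
    ← Finset.sum_Ico_consecutive t (by omega : n ≤ n+1) (by omega : n+1 ≤ 2*n+2),
    ← Finset.sum_Ico_consecutive t (by omega : n+1 ≤ n+2) (by omega : n+2 ≤ 2*n+2),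
    ← Finset.sum_Ico_consecutive t (by omega : n+2 ≤ 2*n+1) (by omega : 2*n+1 ≤ 2*n+2),
    show (2*n+2) = (2*n+1)+1 from rfl,
    Nat.Ico_succ_singleton, Finset.sum_singleton,
    show (1:ℕ) = 0+1 from rfl, Nat.Ico_succ_singleton, Finset.sum_singleton,
    Nat.Ico_succ_singleton, Finset.sum_singleton,
    Nat.Ico_succ_singleton, Finset.sum_singleton]
  ring

lemma telescope (u : ℕ → ℝ) (a b : ℕ) (h : a ≤ b) :
    ∑ c ∈ Finset.Ico a b, (u (c+1) - u c) = u b - u a := by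
  induction b, h using Nat.le_induction with
  | base => simp
  | succ m hm ih => rw [Finset.sum_Ico_succ_top hm, ih]; ring

lemma entf_sum_zero (n : ℕ) (hn : 1 ≤ n) (ρ : ℕ) :
    ∑ c0 ∈ Finset.range (2*n+2), entf n ρ c0 = 0 := by
  rw [split_sum n hn, entf_0, entf_n n ρ hn, entf_n1, entf_last n ρ hn,
    Finset.sum_congr rfl (fun c hc => entf_m1 n ρ c (Finset.mem_Ico.mp hc).1
      (Finset.mem_Ico.mp hc).2),
    Finset.sum_congr rfl (fun c hc => entf_m2 n ρ c (Finset.mem_Ico.mp hc).1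
      (Finset.mem_Ico.mp hc).2),
    telescope (fun c => if ρ = 2*c+3 then (1:ℝ) else 0) 1 n hn,
    telescope (fun c => if ρ = 4*n+8-2*c then (1:ℝ) else 0) (n+2) (2*n+1) (by omega)]
  simp only [show 2*1+3 = 5 from rfl, show 4*n+8-2*(2*n+1) = 6 from by omega,
    show 4*n+8-2*(n+2) = 2*n+4 from by omega]
  ring

lemma rowA (n : ℕ) (hn : 1 ≤ n) (k l : ℕ → ℝ) (x : Fin (2*n+4) → ℝ) (j : ℕ)
    (h1 : 1 ≤ j) (h2 : j ≤ n) :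
    ∑ c0 ∈ Finset.range (2*n+2), entf n (2*j+3) c0 * Fv n k l x (c0+1)
      = Fv n k l x j - Fv n k l x (j+1) := by
  rw [split_sum n hn]
  have p0 : entf n (2*j+3) 0 * Fv n k l x (0+1) = (if j = 1 then Fv n k l x 1 else 0) := by
    rw [entf_0]
    split_ifs <;> first | (exfalso; omega) | ring1
  have pm1 : (∑ c ∈ Finset.Ico 1 n, entf n (2*j+3) c * Fv n k l x (c+1))
      = (if 2 ≤ j then Fv n k l x j else 0) - (if j+1 ≤ n then Fv n k l x (j+1) else 0) := by
    have hpt : ∀ c ∈ Finset.Ico 1 n, entf n (2*j+3) c * Fv n k l x (c+1)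
        = (if c = j-1 then Fv n k l x j else 0) - (if c = j then Fv n k l x (j+1) else 0) := by
      intro c hc
      rw [Finset.mem_Ico] at hc
      rw [entf_m1 n (2*j+3) c hc.1 hc.2]
      by_cases e1 : c = j-1
      · rw [if_pos e1, if_pos (by omega : 2*j+3 = 2*(c+1)+3), if_neg (by omega),
          if_neg (by omega : ¬ c = j), show c+1 = j from by omega]
        ring
      · by_cases e2 : c = j
        · rw [if_neg e1, if_pos e2, if_neg (by omega), if_pos (by omega : 2*j+3 = 2*c+3),
            show c+1 = j+1 from by omega]
          ring
        · rw [if_neg e1, if_neg e2, if_neg (by omega), if_neg (by omega)]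
          ring
    rw [Finset.sum_congr rfl hpt, Finset.sum_sub_distrib,
      Finset.sum_ite_eq' (Finset.Ico 1 n) (j-1) (fun _ => Fv n k l x j),
      Finset.sum_ite_eq' (Finset.Ico 1 n) j (fun _ => Fv n k l x (j+1))]
    simp only [Finset.mem_Ico]
    congr 1
    · split_ifs <;> first | rfl | (exfalso; omega)
    · split_ifs <;> first | rfl | (exfalso; omega)
  have pn : entf n (2*j+3) n * Fv n k l x (n+1) = -(if j = n then Fv n k l x (n+1) else 0) := by
    rw [entf_n n (2*j+3) hn]
    split_ifs <;> first | (exfalso; omega) | ring1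
  have pn1 : entf n (2*j+3) (n+1) * Fv n k l x (n+1+1) = 0 := by
    rw [entf_n1]
    split_ifs <;> first | (exfalso; omega) | ring1
  have pm2 : (∑ c ∈ Finset.Ico (n+2) (2*n+1), entf n (2*j+3) c * Fv n k l x (c+1)) = 0 := by
    rw [Finset.sum_congr rfl (fun c hc => ?_), Finset.sum_const_zero]
    rw [Finset.mem_Ico] at hc
    rw [entf_m2 n (2*j+3) c hc.1 hc.2, if_neg (by omega), if_neg (by omega)]
    ring
  have pl : entf n (2*j+3) (2*n+1) * Fv n k l x (2*n+1+1) = 0 := by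
    rw [entf_last n (2*j+3) hn]
    rw [if_neg (by omega), if_neg (by omega), if_neg (by omega)]
    ring
  rw [p0, pm1, pn, pn1, pm2, pl]
  have c1 : (if j = 1 then Fv n k l x 1 else 0) + (if 2 ≤ j then Fv n k l x j else 0)
      = Fv n k l x j := by
    by_cases hj : j = 1
    · subst hj; rw [if_pos rfl, if_neg (by omega)]; ring
    · rw [if_neg hj, if_pos (by omega)]; ring
  have c2 : (if j+1 ≤ n then Fv n k l x (j+1) else 0) + (if j = n then Fv n k l x (n+1) else 0)
      = Fv n k l x (j+1) := by
    by_cases hj : j = n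
    · subst hj; rw [if_neg (by omega), if_pos rfl]; ring
    · rw [if_pos (by omega), if_neg hj]; ring
  linarith [c1, c2]

lemma rowB (n : ℕ) (hn : 1 ≤ n) (k l : ℕ → ℝ) (x : Fin (2*n+4) → ℝ) :
    ∑ c0 ∈ Finset.range (2*n+2), entf n 4 c0 * Fv n k l x (c0+1)
      = Fv n k l x (n+1) - Fv n k l x (n+2) := by
  rw [split_sum n hn]
  have p0 : entf n 4 0 * Fv n k l x (0+1) = 0 := by
    rw [entf_0, if_neg (by omega), if_neg (by omega), if_neg (by omega)]; ring
  have pm1 : (∑ c ∈ Finset.Ico 1 n, entf n 4 c * Fv n k l x (c+1)) = 0 := by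
    rw [Finset.sum_congr rfl (fun c hc => ?_), Finset.sum_const_zero]
    rw [Finset.mem_Ico] at hc
    rw [entf_m1 n 4 c hc.1 hc.2, if_neg (by omega), if_neg (by omega)]
    ring
  have pn : entf n 4 n * Fv n k l x (n+1) = Fv n k l x (n+1) := by
    rw [entf_n n 4 hn, if_neg (by omega), if_pos rfl, if_neg (by omega)]
    ring
  have pn1 : entf n 4 (n+1) * Fv n k l x (n+1+1) = -Fv n k l x (n+2) := by
    rw [entf_n1, if_neg (by omega), if_neg (by omega), if_pos rfl,
      show n+1+1 = n+2 from rfl]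
    ring
  have pm2 : (∑ c ∈ Finset.Ico (n+2) (2*n+1), entf n 4 c * Fv n k l x (c+1)) = 0 := by
    rw [Finset.sum_congr rfl (fun c hc => ?_), Finset.sum_const_zero]
    rw [Finset.mem_Ico] at hc
    rw [entf_m2 n 4 c hc.1 hc.2, if_neg (by omega), if_neg (by omega)]
    ring
  have pl : entf n 4 (2*n+1) * Fv n k l x (2*n+1+1) = 0 := by
    rw [entf_last n 4 hn, if_neg (by omega), if_neg (by omega), if_neg (by omega)]
    ring
  rw [p0, pm1, pn, pn1, pm2, pl]
  ring

lemma rowC (n : ℕ) (hn : 1 ≤ n) (k l : ℕ → ℝ) (x : Fin (2*n+4) → ℝ) (j : ℕ)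
    (h1 : n+2 ≤ j) (h2 : j ≤ 2*n+1) :
    ∑ c0 ∈ Finset.range (2*n+2), entf n (4*n+8-2*j) c0 * Fv n k l x (c0+1)
      = Fv n k l x j - Fv n k l x (j+1) := by
  rw [split_sum n hn]
  have p0 : entf n (4*n+8-2*j) 0 * Fv n k l x (0+1) = 0 := by
    rw [entf_0, if_neg (by omega), if_neg (by omega), if_neg (by omega)]; ring
  have pm1 : (∑ c ∈ Finset.Ico 1 n, entf n (4*n+8-2*j) c * Fv n k l x (c+1)) = 0 := by
    rw [Finset.sum_congr rfl (fun c hc => ?_), Finset.sum_const_zero]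
    rw [Finset.mem_Ico] at hc
    rw [entf_m1 n (4*n+8-2*j) c hc.1 hc.2, if_neg (by omega), if_neg (by omega)]
    ring
  have pn : entf n (4*n+8-2*j) n * Fv n k l x (n+1) = 0 := by
    rw [entf_n n (4*n+8-2*j) hn, if_neg (by omega), if_neg (by omega), if_neg (by omega)]
    ring
  have pn1 : entf n (4*n+8-2*j) (n+1) * Fv n k l x (n+1+1)
      = (if j = n+2 then Fv n k l x (n+2) else 0) := by
    rw [entf_n1, show n+1+1 = n+2 from rfl]
    split_ifs <;> first | (exfalso; omega) | ring1
  have pm2 : (∑ c ∈ Finset.Ico (n+2) (2*n+1), entf n (4*n+8-2*j) c * Fv n k l x (c+1))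
      = (if n+3 ≤ j then Fv n k l x j else 0) - (if j ≤ 2*n then Fv n k l x (j+1) else 0) := by
    have hpt : ∀ c ∈ Finset.Ico (n+2) (2*n+1), entf n (4*n+8-2*j) c * Fv n k l x (c+1)
        = (if c = j-1 then Fv n k l x j else 0) - (if c = j then Fv n k l x (j+1) else 0) := by
      intro c hc
      rw [Finset.mem_Ico] at hc
      rw [entf_m2 n (4*n+8-2*j) c hc.1 hc.2]
      by_cases e1 : c = j-1
      · rw [if_pos e1, if_pos (by omega : 4*n+8-2*j = 4*n+8-2*(c+1)), if_neg (by omega),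
          if_neg (by omega : ¬ c = j), show c+1 = j from by omega]
        ring
      · by_cases e2 : c = j
        · rw [if_neg e1, if_pos e2, if_neg (by omega),
            if_pos (by omega : 4*n+8-2*j = 4*n+8-2*c), show c+1 = j+1 from by omega]
          ring
        · rw [if_neg e1, if_neg e2, if_neg (by omega), if_neg (by omega)]
          ring
    rw [Finset.sum_congr rfl hpt, Finset.sum_sub_distrib,
      Finset.sum_ite_eq' (Finset.Ico (n+2) (2*n+1)) (j-1) (fun _ => Fv n k l x j),
      Finset.sum_ite_eq' (Finset.Ico (n+2) (2*n+1)) j (fun _ => Fv n k l x (j+1))]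
    simp only [Finset.mem_Ico]
    congr 1
    · split_ifs <;> first | rfl | (exfalso; omega)
    · split_ifs <;> first | rfl | (exfalso; omega)
  have pl : entf n (4*n+8-2*j) (2*n+1) * Fv n k l x (2*n+1+1)
      = -(if j = 2*n+1 then Fv n k l x (2*n+2) else 0) := by
    rw [entf_last n (4*n+8-2*j) hn, show 2*n+1+1 = 2*n+2 from rfl]
    split_ifs <;> first | (exfalso; omega) | ring1
  rw [p0, pm1, pn, pn1, pm2, pl]
  have c1 : (if j = n+2 then Fv n k l x (n+2) else 0) + (if n+3 ≤ j then Fv n k l x j else 0)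
      = Fv n k l x j := by
    by_cases hj : j = n+2
    · subst hj; rw [if_pos rfl, if_neg (by omega)]; ring
    · rw [if_neg hj, if_pos (by omega)]; ring
  have c2 : (if j ≤ 2*n then Fv n k l x (j+1) else 0)
        + (if j = 2*n+1 then Fv n k l x (2*n+2) else 0)
      = Fv n k l x (j+1) := by
    by_cases hj : j = 2*n+1
    · subst hj; rw [if_neg (by omega), if_pos rfl, show 2*n+1+1 = 2*n+2 from rfl]; ring
    · rw [if_pos (by omega), if_neg hj]; ring
  linarith [c1, c2]

lemma Gamma_iff (n : ℕ) (hn : 1 ≤ n) (k l : ℕ → ℝ) (x : Fin (2*n+4) → ℝ) :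
    (Gamma n).mulVec (Rvec n k l x) = 0
      ↔ ∀ j, 1 ≤ j → j ≤ 2*n+1 → Fv n k l x j = Fv n k l x (j+1) := by
  constructor
  · intro h j h1 h2
    rcases show (1 ≤ j ∧ j ≤ n) ∨ j = n+1 ∨ (n+2 ≤ j ∧ j ≤ 2*n+1) from by omega
      with hc | hc | hc
    · have hr := congrFun h ⟨2*j+2, by omega⟩
      rw [Gamma_mulVec, Pi.zero_apply] at hr
      rw [show ((⟨2*j+2, by omega⟩ : Fin (2*n+4)) : ℕ) + 1 = 2*j+3 from rfl] at hr
      rw [rowA n hn k l x j hc.1 hc.2] at hr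
      linarith
    · have hr := congrFun h ⟨3, by omega⟩
      rw [Gamma_mulVec, Pi.zero_apply] at hr
      rw [show ((⟨3, by omega⟩ : Fin (2*n+4)) : ℕ) + 1 = 4 from rfl] at hr
      rw [rowB n hn k l x] at hr
      rw [hc, show n+1+1 = n+2 from rfl]
      linarith
    · have hr := congrFun h ⟨4*n+7-2*j, by omega⟩
      rw [Gamma_mulVec, Pi.zero_apply] at hr
      rw [show ((⟨4*n+7-2*j, by omega⟩ : Fin (2*n+4)) : ℕ) + 1 = 4*n+8-2*j from by
        simp only [Fin.val_mk]; omega] at hr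
      rw [rowC n hn k l x j hc.1 hc.2] at hr
      linarith
  · intro hC
    funext r
    rw [Gamma_mulVec, Pi.zero_apply]
    have hfix : ∀ c0 ∈ Finset.range (2*n+2),
        entf n ((r : ℕ)+1) c0 * Fv n k l x (c0+1)
          = entf n ((r : ℕ)+1) c0 * Fv n k l x 1 := by
      intro c0 hc0
      rw [Finset.mem_range] at hc0
      rw [chain n k l x hC (c0+1) (by omega) (by omega)]
    rw [Finset.sum_congr rfl hfix, ← Finset.sum_mul, entf_sum_zero n hn, zero_mul]

/-- For every `x ∈ ℝ^(2n+4)`, one has `Γ·R(x) = 0` if and only if `Ã_κᵗ·Ψ(x) = 0`. -/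
theorem steady_state_iff_kernel (n : ℕ) (hn : 1 ≤ n) (k l : ℕ → ℝ)
    (hk : ∀ i, 1 ≤ i → i ≤ 2*n+1 → 0 < k i)
    (hl : ∀ i, 1 ≤ i → i ≤ 2*n+1 → 0 < l i) :
    ∀ x : Fin (2*n+4) → ℝ,
      (Gamma n).mulVec (Rvec n k l x) = 0 ↔ (Atilde n k l).mulVec (Psi n x) = 0 := by
  intro x
  rw [Gamma_iff n hn k l x, Atilde_iff n hn k l x]

end
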